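/- For a structure (D, ⊕, *, 0, {r : r ∈ [0,1]∩ℚ}) with MV-algebra reduct, the axioms (DMV1') r(x ⊙ y*) = (rx) ⊙ (ry)*, (DMV2') (r ⊙ q*)x = (rx) ⊙ (qx)*, (DMV3') r(qx) = (rq)x, (DMV4') 1x = x (for all x, y ∈ D, r, q ∈ [0,1]∩ℚ) are equivalent to the DMV-algebra axioms: there exist unary operations δ_n (n ≥ 1) with nδ_n x = x and δ_n x ⊙ (n−1)δ_n x = 0, where the correspondence is given by δ_n x = (1/n)x. In particular, (DMV1')–(DMV4') is an equivalent axiomatization of DMV-algebras. -/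

import Mathlib

/-- An MV-algebra: an abelian monoid `(A, ⊕, 0)` with an involution `*` satisfying
the Łukasiewicz axioms. -/
class MVAlgebra (A : Type) where
  oplus : A → A → A
  star : A → A
  zero : A
  oplus_assoc : ∀ x y z : A, oplus (oplus x y) z = oplus x (oplus y z)
  oplus_comm : ∀ x y : A, oplus x y = oplus y x
  oplus_zero : ∀ x : A, oplus x zero = x
  star_star : ∀ x : A, star (star x) = x
  lukasiewicz : ∀ x y : A,
    oplus (star (oplus (star x) y)) y = oplus (star (oplus (star y) x)) x
  oplus_star_zero : ∀ x : A, oplus (star zero) x = star zero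

namespace MVAlgebra

variable {A : Type} [MVAlgebra A]

/-- The top element `1 = 0*`. -/
def one : A := star zero

/-- The MV-product `x ⊙ y = (x* ⊕ y*)*`. -/
def odot (x y : A) : A := star (oplus (star x) (star y))

/-- `n`-fold ⊕-sum of an element. -/
def nmul : ℕ → A → A
  | 0, _ => zero
  | n + 1, x => oplus (nmul n x) x

/-- The lattice join `x ∨ y = (x ⊙ y*) ⊕ y`. -/
def sup (x y : A) : A := oplus (odot x (star y)) y

/-- The lattice meet `x ∧ y = (x ⊕ y*) ⊙ y`. -/
def inf (x y : A) : A := odot (oplus x (star y)) y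

/-- The MV-order: `x ≤ y` iff `x ⊙ y* = 0`. -/
def le (x y : A) : Prop := odot x (star y) = zero

end MVAlgebra

/-- The rational unit interval `[0,1] ∩ ℚ`. -/
def QI : Type := {q : ℚ // 0 ≤ q ∧ q ≤ 1}

namespace QI

/-- Truncated addition on `[0,1] ∩ ℚ`. -/
def oplus (r s : QI) : QI :=
  ⟨min (r.1 + s.1) 1, le_min (add_nonneg r.2.1 s.2.1) zero_le_one, min_le_right _ _⟩

/-- Negation `r* = 1 - r` on `[0,1] ∩ ℚ`. -/
def star (r : QI) : QI :=
  ⟨1 - r.1, by constructor <;> [linarith [r.2.2]; linarith [r.2.1]]⟩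

def zero : QI := ⟨0, le_refl 0, zero_le_one⟩

def one : QI := ⟨1, zero_le_one, le_refl 1⟩

/-- Ordinary multiplication of rationals, restricted to `[0,1] ∩ ℚ`. -/
def mul (r s : QI) : QI :=
  ⟨r.1 * s.1, mul_nonneg r.2.1 s.2.1, by nlinarith [r.2.1, r.2.2, s.2.1, s.2.2]⟩

/-- The MV-product `r ⊙ s = (r* ⊕ s*)*` on `[0,1] ∩ ℚ`. -/
def odot (r s : QI) : QI := star (oplus (star r) (star s))

/-- Division by a natural number in `[0,1] ∩ ℚ`. -/
def div (r : QI) (n : ℕ) : QI :=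
  ⟨r.1 / n, div_nonneg r.2.1 (Nat.cast_nonneg n), by
    rcases Nat.eq_zero_or_pos n with h | h
    · simp [h]
    · exact le_trans (div_le_self r.2.1 (by exact_mod_cast h)) r.2.2⟩

/-- `1/n` as an element of `[0,1] ∩ ℚ` (with `1/0 = 0`). -/
def oneOver (n : ℕ) : QI := div one n

/-- Join (maximum) in `[0,1] ∩ ℚ`. -/
def sup (r s : QI) : QI :=
  ⟨max r.1 s.1, le_max_of_le_left r.2.1, max_le r.2.2 s.2.2⟩

/-- Meet (minimum) in `[0,1] ∩ ℚ`. -/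
def inf (r s : QI) : QI :=
  ⟨min r.1 s.1, le_min r.2.1 s.2.1, min_le_of_left_le r.2.2⟩

end QI
namespace MVAlgebra

variable {A : Type} [MVAlgebra A]

attribute [simp] star_star

lemma zero_oplus (x : A) : oplus zero x = x := by rw [oplus_comm]; exact oplus_zero x

lemma one_oplus (x : A) : oplus one x = one := oplus_star_zero x

lemma oplus_one (x : A) : oplus x one = one := by rw [oplus_comm]; exact oplus_star_zero x

@[simp] lemma star_one : star (one : A) = zero := star_star zero

lemma star_zero_eq : star (zero : A) = one := rfl

lemma oplus_star_self (x : A) : oplus (star x) x = one := by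
  have h := lukasiewicz x (one : A)
  rw [oplus_one, star_one, zero_oplus] at h
  exact h.symm

lemma oplus_self_star (x : A) : oplus x (star x) = one := by
  rw [oplus_comm]; exact oplus_star_self x

lemma star_inj {x y : A} (h : star x = star y) : x = y := by
  have := congrArg star h; simpa using this

lemma odot_comm (x y : A) : odot x y = odot y x := by
  unfold odot; rw [oplus_comm]

lemma odot_assoc (x y z : A) : odot (odot x y) z = odot x (odot y z) := by
  unfold odot; simp [oplus_assoc]

lemma star_oplus (x y : A) : star (oplus x y) = odot (star x) (star y) := by
  unfold odot; simp

lemma star_odot (x y : A) : star (odot x y) = oplus (star x) (star y) := by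
  unfold odot; simp

@[simp] lemma odot_zero (x : A) : odot x zero = zero := by
  unfold odot; rw [star_zero_eq, oplus_one]; exact star_one

@[simp] lemma zero_odot (x : A) : odot zero x = zero := by rw [odot_comm]; exact odot_zero x

@[simp] lemma odot_one (x : A) : odot x one = x := by
  unfold odot; rw [star_one, oplus_zero]; exact star_star x

@[simp] lemma one_odot (x : A) : odot one x = x := by rw [odot_comm]; exact odot_one x

lemma odot_star_self (x : A) : odot x (star x) = zero := by
  unfold odot; rw [star_star, oplus_star_self]; exact star_one

lemma odot_self_star (x : A) : odot (star x) x = zero := by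
  rw [odot_comm]; exact odot_star_self x

/-- truncated subtraction -/
def sub (x y : A) : A := odot x (star y)

lemma sub_eq (x y : A) : sub x y = star (oplus (star x) y) := by
  unfold sub odot; rw [star_star]

lemma luk' (x y : A) : oplus (sub x y) y = oplus (sub y x) x := by
  rw [sub_eq, sub_eq]; exact lukasiewicz x y

lemma sub_self (x : A) : sub x x = zero := odot_star_self x

lemma sub_zero (x : A) : sub x zero = x := by unfold sub; rw [star_zero_eq]; exact odot_one x

lemma zero_sub (x : A) : sub zero x = zero := zero_odot _

lemma le_iff_sub (x y : A) : le x y ↔ sub x y = zero := Iff.rfl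

lemma le_refl' (x : A) : le x x := sub_self x

lemma zero_le (x : A) : le zero x := zero_odot _

lemma le_one (x : A) : le x one := by unfold le; rw [star_one]; exact odot_zero x

lemma le_zero {x : A} (h : le x zero) : x = zero := by
  unfold le at h; rw [star_zero_eq, odot_one] at h; exact h

lemma le_oplus_right (x y : A) : le x (oplus y x) := by
  unfold le
  rw [star_oplus, odot_comm (star y) (star x), ← odot_assoc, odot_star_self, zero_odot]

lemma le_oplus_left (x y : A) : le x (oplus x y) := by
  rw [oplus_comm]; exact le_oplus_right x y

lemma sub_le_self (x y : A) : le (sub x y) x := by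
  unfold le sub
  rw [odot_comm x (star y), odot_assoc, odot_star_self, odot_zero]

lemma sub_le_star (x y : A) : le (sub x y) (star y) := by
  unfold le sub
  rw [star_star, odot_assoc, odot_self_star, odot_zero]

lemma le_iff_oplus_one (x y : A) : le x y ↔ oplus (star x) y = one := by
  unfold le
  constructor
  · intro h
    have : star (oplus (star x) y) = zero := by
      rw [← sub_eq]; exact h
    have := congrArg star this; simpa [star_zero_eq] using this
  · intro h
    show odot x (star y) = zero
    have : sub x y = zero := by rw [sub_eq, h]; exact star_one
    exact this

end MVAlgebra
namespace MVAlgebra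

variable {A : Type} [MVAlgebra A]

lemma inf_comm (x y : A) : inf x y = inf y x := by
  apply star_inj
  show star (inf x y) = star (inf y x)
  unfold inf odot
  rw [star_star, star_star]
  have h := lukasiewicz (star x) (star y)
  simp only [star_star] at h
  -- h : oplus (star (oplus x (star y))) (star y) = oplus (star (oplus y (star x))) (star x)
  exact h

lemma inf_le_right (x y : A) : le (inf x y) y := by
  unfold le inf
  rw [odot_assoc, odot_star_self, odot_zero]

lemma inf_le_left (x y : A) : le (inf x y) x := by
  rw [inf_comm]; exact inf_le_right y x

lemma inf_eq_left {x y : A} (h : le x y) : inf x y = x := by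
  rw [inf_comm]
  unfold inf
  rw [le_iff_oplus_one] at h
  rw [oplus_comm y (star x), h, one_odot]

-- monotonicity
lemma odot_mono_left {a b : A} (h : le a b) (c : A) : le (odot a c) (odot b c) := by
  have ha : a = odot (oplus a (star b)) b := (inf_eq_left h).symm
  show odot (odot a c) (star (odot b c)) = zero
  rw [ha, odot_assoc (oplus a (star b)) b c, odot_assoc, odot_star_self, odot_zero]

lemma odot_mono_right {a b : A} (h : le a b) (c : A) : le (odot c a) (odot c b) := by
  rw [odot_comm c a, odot_comm c b]; exact odot_mono_left h c

lemma le_trans' {a b c : A} (h1 : le a b) (h2 : le b c) : le a c := by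
  have ha : a = odot (oplus a (star b)) b := (inf_eq_left h1).symm
  show odot a (star c) = zero
  rw [ha, odot_assoc]
  unfold le at h2
  rw [h2, odot_zero]

lemma oplus_sub_sup (x y : A) : oplus (sub x y) y = oplus (sub y x) x := luk' x y

lemma le_oplus_sub (x y : A) : le x (oplus (sub x y) y) := by
  rw [luk']; exact le_oplus_right x (sub y x)

lemma sub_eq_zero_oplus {a b : A} (h : le a b) : oplus (sub a b) b = b := by
  rw [le_iff_sub] at h; rw [h, zero_oplus]

lemma oplus_sub_of_le {a b : A} (h : le a b) : oplus (sub b a) a = b := by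
  rw [← luk']; exact sub_eq_zero_oplus h

lemma le_antisymm' {a b : A} (h1 : le a b) (h2 : le b a) : a = b := by
  have := oplus_sub_of_le h1
  rw [le_iff_sub] at h2
  rw [h2, zero_oplus] at this
  exact this

lemma star_mono {a b : A} (h : le a b) : le (star b) (star a) := by
  unfold le; rw [star_star, odot_comm]; exact h

lemma oplus_mono_left {a b : A} (h : le a b) (c : A) : le (oplus a c) (oplus b c) := by
  have h1 : le (odot (star b) (star c)) (odot (star a) (star c)) :=
    odot_mono_left (star_mono h) (star c)
  have h2 := star_mono h1
  rw [← star_oplus, ← star_oplus, star_star, star_star] at h2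
  exact h2

lemma oplus_mono_right {a b : A} (h : le a b) (c : A) : le (oplus c a) (oplus c b) := by
  rw [oplus_comm c a, oplus_comm c b]; exact oplus_mono_left h c

lemma sub_mono_left {a b : A} (h : le a b) (c : A) : le (sub a c) (sub b c) :=
  odot_mono_left h (star c)

lemma sub_anti_right {a b : A} (h : le a b) (c : A) : le (sub c b) (sub c a) :=
  odot_mono_right (star_mono h) c

lemma oplus_sub_cancel {a b : A} (h : odot a b = zero) : sub (oplus a b) b = a := by
  have hle : le a (star b) := by
    unfold le; rw [star_star]; exact h
  have : sub (oplus a b) b = inf a (star b) := by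
    unfold inf sub
    rw [star_star]
  rw [this, inf_eq_left hle]

lemma le_sub_of_le_oplus {u v t : A} (h : le u (oplus v t)) : le (sub u t) v := by
  have h1 : le (sub u t) (sub (oplus v t) t) := sub_mono_left h t
  have h2 : sub (oplus v t) t = inf v (star t) := by
    unfold inf sub; rw [star_star]
  rw [h2] at h1
  exact le_trans' h1 (inf_le_left v (star t))

lemma sup_le {x y z : A} (h1 : le x z) (h2 : le y z) : le (oplus (sub x y) y) z := by
  have key : oplus (sub z y) y = z := oplus_sub_of_le h2
  have : le (oplus (sub x y) y) (oplus (sub z y) y) := oplus_mono_left (sub_mono_left h1 y) y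
  rw [key] at this; exact this

end MVAlgebra
namespace MVAlgebra

variable {A : Type} [MVAlgebra A]

lemma resid1 {p q r : A} (h : le p (oplus (star q) r)) : le (odot p q) r := by
  have h1 : le (odot p q) (odot (oplus (star q) r) q) := odot_mono_left h q
  have h2 : odot (oplus (star q) r) q = inf r q := by
    unfold inf; rw [oplus_comm]
  rw [h2] at h1
  exact le_trans' h1 (inf_le_left r q)

lemma semi_assoc (p q r : A) : le (odot (oplus p q) r) (oplus p (odot q r)) := by
  apply resid1
  have h1 : le q (oplus (odot q r) (star r)) := by
    have := le_oplus_sub q (star r)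
    unfold sub at this; rw [star_star] at this
    exact this
  have h2 : le (oplus p q) (oplus p (oplus (odot q r) (star r))) := oplus_mono_right h1 p
  have h3 : oplus p (oplus (odot q r) (star r)) = oplus (star r) (oplus p (odot q r)) := by
    rw [oplus_comm (odot q r) (star r), ← oplus_assoc, oplus_comm p (star r), oplus_assoc]
  rw [h3] at h2
  exact h2

lemma inf_eq_sub_sub (x y : A) : inf x y = sub x (sub x y) := by
  rw [inf_comm]
  unfold inf sub
  rw [star_odot, star_star, odot_comm, oplus_comm]

lemma sub_inf (x y : A) : sub x (inf x y) = sub x y := by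
  rw [inf_eq_sub_sub, ← inf_eq_sub_sub x (sub x y), inf_comm]
  exact inf_eq_left (sub_le_self x y)

lemma star_inf (x y : A) : star (inf x y) = oplus (sub (star x) (star y)) (star y) := by
  unfold inf
  rw [star_odot, sub_eq, star_star]

lemma le_inf {x y z : A} (h1 : le z x) (h2 : le z y) : le z (inf x y) := by
  have hs : le (star (inf x y)) (star z) := by
    rw [star_inf]
    exact sup_le (star_mono h1) (star_mono h2)
  have := star_mono hs
  rw [star_star, star_star] at this
  exact this

/-- the crucial prelinearity-type lemma -/
lemma inf_sub_sub (x y : A) : inf (sub x y) (sub y x) = zero := by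
  set t := sub x y with ht
  set s := sub y x with hs
  have hstar_s : star s = oplus (star y) x := by
    rw [hs, sub_eq, star_star]
  have step1 : le (odot (oplus t (star s)) y) x := by
    rw [hstar_s]
    have hsa := semi_assoc t (oplus (star y) x) y
    have e1 : odot (oplus (star y) x) y = inf x y := by
      unfold inf; rw [oplus_comm]
    have e2 : oplus t (inf x y) = x := by
      rw [inf_eq_sub_sub, ← ht, oplus_comm]
      have := luk' x t
      rw [(le_iff_sub t x).mp (by rw [ht]; exact sub_le_self x y), zero_oplus] at this
      exact this
    rw [e1, e2] at hsa
    exact hsa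
  have : inf t s = odot (odot (oplus t (star s)) y) (star x) := by
    unfold inf
    rw [hs]
    show odot (oplus t (star s)) (odot y (star x)) = _
    rw [← odot_assoc]
  rw [this]
  apply le_zero
  have := odot_mono_left step1 (star x)
  rw [odot_star_self] at this
  exact this

-- nmul lemmas
lemma nmul_zero (x : A) : nmul 0 x = zero := rfl
lemma nmul_succ (n : ℕ) (x : A) : nmul (n+1) x = oplus (nmul n x) x := rfl
@[simp] lemma nmul_one (x : A) : nmul 1 x = x := by rw [nmul_succ, nmul_zero, zero_oplus]

lemma nmul_zero_elem (n : ℕ) : nmul n (zero : A) = zero := by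
  induction n with
  | zero => rfl
  | succ k ih => rw [nmul_succ, ih, oplus_zero]

lemma nmul_add (m n : ℕ) (x : A) : nmul (m + n) x = oplus (nmul m x) (nmul n x) := by
  induction n with
  | zero => rw [Nat.add_zero, nmul_zero, oplus_zero]
  | succ k ih => rw [← Nat.add_assoc, nmul_succ, nmul_succ, ih, oplus_assoc]

lemma nmul_mul (m n : ℕ) (x : A) : nmul (m * n) x = nmul m (nmul n x) := by
  induction m with
  | zero => rw [Nat.zero_mul]; rfl
  | succ k ih => rw [Nat.succ_mul, nmul_add, ih, nmul_succ]

lemma nmul_oplus (n : ℕ) (x y : A) : nmul n (oplus x y) = oplus (nmul n x) (nmul n y) := by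
  induction n with
  | zero => rw [nmul_zero, nmul_zero, nmul_zero, oplus_zero]
  | succ k ih =>
    rw [nmul_succ, nmul_succ, nmul_succ, ih]
    rw [oplus_assoc, oplus_assoc]
    congr 1
    rw [← oplus_assoc, ← oplus_assoc, oplus_comm (nmul k y) x]

lemma nmul_mono_count {m n : ℕ} (h : m ≤ n) (x : A) : le (nmul m x) (nmul n x) := by
  obtain ⟨d, rfl⟩ := Nat.exists_eq_add_of_le h
  rw [nmul_add]
  exact le_oplus_left _ _

lemma nmul_mono {x y : A} (h : le x y) (n : ℕ) : le (nmul n x) (nmul n y) := by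
  induction n with
  | zero => exact le_refl' _
  | succ k ih =>
    rw [nmul_succ, nmul_succ]
    exact le_trans' (oplus_mono_left ih x) (oplus_mono_right h (nmul k y))

end MVAlgebra
namespace MVAlgebra

variable {A : Type} [MVAlgebra A]

lemma le_star_iff (a b : A) : le a (star b) ↔ odot a b = zero := by
  unfold le; rw [star_star]

lemma oplus_oplus_oplus_comm (a b c d : A) :
    oplus (oplus a b) (oplus c d) = oplus (oplus a c) (oplus b d) := by
  rw [oplus_assoc a b (oplus c d), ← oplus_assoc b c d, oplus_comm b c, oplus_assoc c b d,
      ← oplus_assoc a c (oplus b d)]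

lemma sub_sub_comm (x u v : A) : sub (sub x u) v = sub (sub x v) u := by
  unfold sub
  rw [odot_assoc, odot_comm (star u) (star v), ← odot_assoc]

lemma sub_oplus_inf (p q : A) : sub (oplus p q) q = inf p (star q) := by
  unfold inf sub; rw [star_star]

lemma odot_oplus_zero {u v w : A} (h1 : odot u v = zero) (h2 : odot (oplus u v) w = zero) :
    odot u (oplus v w) = zero := by
  have hu : u = sub (oplus u v) v := (oplus_sub_cancel h1).symm
  have h2' : le (oplus u v) (star w) := (le_star_iff _ _).mpr h2
  have h3 : le (sub (oplus u v) v) (sub (star w) v) := sub_mono_left h2' v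
  rw [← hu] at h3
  have e : sub (star w) v = star (oplus v w) := by
    rw [sub_eq, star_star, oplus_comm]
  rw [e] at h3
  exact (le_star_iff _ _).mp h3

lemma nmul_disjoint {q : ℕ} {x : A} (hd : odot x (nmul (q-1) x) = zero) :
    ∀ i j, i + j ≤ q → odot (nmul i x) (nmul j x) = zero := by
  have hx1 : le x (star (nmul (q-1) x)) := (le_star_iff _ _).mpr hd
  have S : ∀ j, 1 ≤ j → j ≤ q → odot (nmul (q-j) x) (nmul j x) = zero := by
    intro j
    induction j with
    | zero => intro h; omega
    | succ j ih =>
      intro _ hjq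
      rcases Nat.eq_zero_or_pos j with rfl | hj
      · -- j+1 = 1
        rw [nmul_one, odot_comm]; exact hd
      · have ihh := ih hj (by omega)
        -- le (nmul j x) (star (nmul (q-j) x))
        have h1 : le (nmul j x) (star (nmul (q-j) x)) := by
          rw [le_star_iff]; rw [odot_comm]; exact ihh
        have eq1 : (q - j) = (q - (j+1)) + 1 := by omega
        set w := star (nmul (q-(j+1)) x) with hw
        have e2 : star (nmul (q-j) x) = sub w x := by
          rw [eq1, nmul_succ, star_oplus, hw]
          unfold sub
          rfl

        rw [e2] at h1
        have hxw : le x w := by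
          refine le_trans' hx1 (star_mono ?_)
          exact nmul_mono_count (by omega) x
        have h2 : le (nmul (j+1) x) (oplus (sub w x) x) := by
          rw [nmul_succ]
          exact oplus_mono_left h1 x
        rw [luk', (le_iff_sub x w).mp hxw, zero_oplus] at h2
        rw [le_star_iff] at h2
        rw [odot_comm]
        exact h2
  intro i j hij
  rcases Nat.eq_zero_or_pos j with rfl | hj
  · rw [nmul_zero, odot_zero]
  · have hS := S j hj (by omega)
    have : le (nmul i x) (nmul (q-j) x) := nmul_mono_count (by omega) x
    have h2 := odot_mono_left this (nmul j x)
    rw [hS] at h2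
    exact le_zero h2

lemma sub_oplus_le (x y z w : A) :
    le (sub (oplus x y) (oplus z w)) (oplus (sub x z) (sub y w)) := by
  apply le_sub_of_le_oplus
  have hx : le x (oplus (sub x z) z) := le_oplus_sub x z
  have hy : le y (oplus (sub y w) w) := le_oplus_sub y w
  have h : le (oplus x y) (oplus (oplus (sub x z) z) (oplus (sub y w) w)) :=
    le_trans' (oplus_mono_left hx y) (oplus_mono_right hy _)
  rw [oplus_oplus_oplus_comm] at h
  exact h

lemma nmul_sub_le (p r : A) (k : ℕ) :
    le (sub (nmul k p) (nmul k r)) (nmul k (sub p r)) := by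
  induction k with
  | zero =>
    rw [nmul_zero, nmul_zero, nmul_zero, zero_sub]; exact le_refl' _
  | succ j ih =>
    rw [nmul_succ, nmul_succ, nmul_succ]
    refine le_trans' (sub_oplus_le _ _ _ _) ?_
    exact oplus_mono_left ih (sub p r)

lemma inf_nmul_zero {t s : A} (h : inf t s = zero) (k : ℕ) : inf t (nmul k s) = zero := by
  induction k with
  | zero =>
    apply le_zero
    have := inf_le_right t (nmul 0 s)
    rw [nmul_zero] at this
    exact this
  | succ j ih =>
    have e : nmul (j+1) s = oplus s (nmul j s) := by rw [nmul_succ, oplus_comm]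
    rw [e]
    set M := inf t (oplus s (nmul j s)) with hM
    have hMt : le M t := inf_le_left _ _
    have hMr : le M (oplus s (nmul j s)) := inf_le_right _ _
    have h1 : le (sub M (nmul j s)) t := le_trans' (sub_le_self _ _) hMt
    have h2 : le (sub M (nmul j s)) s := by
      refine le_trans' (sub_mono_left hMr (nmul j s)) ?_
      rw [sub_oplus_inf]
      exact inf_le_left _ _
    have h3 : le (sub M (nmul j s)) zero := by
      have := le_inf h1 h2
      rw [h] at this
      exact this
    have h4 : le M (nmul j s) := le_zero h3
    have h5 : le M (inf t (nmul j s)) := le_inf hMt h4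
    rw [ih] at h5
    exact le_zero h5

theorem nmul_inj {n : ℕ} (hn : 1 ≤ n) {a b : A}
    (hab : nmul n a = nmul n b)
    (ha : odot a (nmul (n-1) a) = zero)
    (hb : odot b (nmul (n-1) b) = zero) : a = b := by
  have key : ∀ (a b : A), nmul n a = nmul n b →
      odot a (nmul (n-1) a) = zero → odot b (nmul (n-1) b) = zero →
      sub a b = zero := by
    intro a b hab ha hb
    have e1 : sub (nmul n a) (nmul (n-1) a) = a := by
      have : nmul n a = oplus a (nmul (n-1) a) := by
        conv_lhs => rw [show n = (n-1)+1 by omega]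
        rw [nmul_succ, oplus_comm]
      rw [this]
      exact oplus_sub_cancel ha
    have e2 : sub (nmul n b) b = nmul (n-1) b := by
      have : nmul n b = oplus (nmul (n-1) b) b := by
        conv_lhs => rw [show n = (n-1)+1 by omega]
        exact nmul_succ _ _
      rw [this]
      exact oplus_sub_cancel (by rw [odot_comm]; exact hb)
    have keyt : sub a b = sub (nmul (n-1) b) (nmul (n-1) a) := by
      calc sub a b = sub (sub (nmul n a) (nmul (n-1) a)) b := by rw [e1]
        _ = sub (sub (nmul n a) b) (nmul (n-1) a) := sub_sub_comm _ _ _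
        _ = sub (sub (nmul n b) b) (nmul (n-1) a) := by rw [hab]
        _ = sub (nmul (n-1) b) (nmul (n-1) a) := by rw [e2]
    have hts : le (sub a b) (nmul (n-1) (sub b a)) := by
      rw [keyt]; exact nmul_sub_le b a (n-1)
    have hD : inf (sub a b) (sub b a) = zero := inf_sub_sub a b
    have : le (sub a b) (inf (sub a b) (nmul (n-1) (sub b a))) :=
      le_inf (le_refl' _) hts
    rw [inf_eq_left hts] at this
    have h0 := inf_nmul_zero hD (n-1)
    have : le (sub a b) zero := by
      have h5 := le_inf (le_refl' (sub a b)) hts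
      rw [h0] at h5
      exact h5
    exact le_zero this
  have t0 := key a b hab ha hb
  have s0 := key b a hab.symm hb ha
  exact le_antisymm' t0 s0

end MVAlgebra
namespace MVAlgebra

variable {A : Type} [MVAlgebra A]

lemma split_disjoint {q : ℕ} {w p r : A} (hpr : oplus p r = w) (hd0 : odot p r = zero)
    (hw : odot w (nmul (q-1) w) = zero) {k : ℕ} (hk : k ≤ q) :
    ∀ j, j ≤ k → odot (nmul k p) (nmul j r) = zero := by
  have hpw : le p w := by rw [← hpr]; exact le_oplus_left p r
  have hrstar : star r = oplus (star w) p := by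
    have h1 : odot r p = zero := by rw [odot_comm]; exact hd0
    have h2 : oplus r p = w := by rw [oplus_comm]; exact hpr
    have h3 : sub (oplus r p) p = r := oplus_sub_cancel h1
    rw [h2] at h3
    rw [← h3, sub_eq, star_star]
  have hwq : le (nmul (q-1) w) (star w) := by
    rw [le_star_iff, odot_comm]; exact hw
  intro j
  induction j with
  | zero => intro _; rw [nmul_zero, odot_zero]
  | succ j ih =>
    intro hjk
    have IH := ih (by omega)
    have e : oplus (nmul k p) (nmul j r) =
        oplus (oplus (nmul j w) (nmul (k-j-1) p)) p := by
      have e1 : nmul k p = oplus (nmul j p) (nmul (k-j) p) := by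
        rw [← nmul_add]; congr 1; omega
      have e2 : nmul (k-j) p = oplus (nmul (k-j-1) p) p := by
        rw [show k-j = (k-j-1)+1 by omega]; rfl
      rw [e1, e2, oplus_comm (nmul j p) _, oplus_assoc, oplus_assoc]
      rw [oplus_comm (nmul j p) (nmul j r), ← nmul_oplus, oplus_comm r p, hpr]
      rw [oplus_comm p (nmul j w), ← oplus_assoc, oplus_comm (nmul (k-j-1) p) (nmul j w)]
    have hX : le (oplus (nmul j w) (nmul (k-j-1) p)) (star w) := by
      have b1 : le (oplus (nmul j w) (nmul (k-j-1) p)) (oplus (nmul j w) (nmul (k-j-1) w)) :=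
        oplus_mono_right (nmul_mono hpw _) _
      have b2 : oplus (nmul j w) (nmul (k-j-1) w) = nmul (j + (k-j-1)) w := (nmul_add _ _ _).symm
      have b3 : le (nmul (j + (k-j-1)) w) (nmul (q-1) w) := nmul_mono_count (by omega) w
      rw [b2] at b1
      exact le_trans' b1 (le_trans' b3 hwq)
    have h2 : odot (oplus (nmul k p) (nmul j r)) r = zero := by
      rw [e]
      have : le (oplus (oplus (nmul j w) (nmul (k-j-1) p)) p) (oplus (star w) p) :=
        oplus_mono_left hX p
      rw [← hrstar] at this
      exact (le_star_iff _ _).mp this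
    have := odot_oplus_zero IH h2
    rw [← nmul_succ] at this
    exact this

theorem nmul_sub_exact {q : ℕ} {u v : A}
    (hu : odot u (nmul (q-1) u) = zero) (hv : odot v (nmul (q-1) v) = zero)
    {k : ℕ} (hk : k ≤ q) :
    sub (nmul k u) (nmul k v) = nmul k (sub u v) := by
  set t := sub u v with ht
  set s := sub v u with hs
  set vv := inf u v with hvv
  have h1 : vv = sub u t := inf_eq_sub_sub u v
  have h2 : vv = sub v s := by rw [hvv, inf_comm]; exact inf_eq_sub_sub v u
  have dec_u : oplus t vv = u := by
    rw [h1, oplus_comm]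
    have := luk' u t
    rw [(le_iff_sub t u).mp (sub_le_self u v), zero_oplus] at this
    exact this
  have dis_u : odot t vv = zero := by
    rw [h1]
    show odot t (odot u (star t)) = zero
    rw [← odot_assoc, odot_comm t u, odot_assoc, odot_star_self, odot_zero]
  have dec_v : oplus s vv = v := by
    rw [h2, oplus_comm]
    have := luk' v s
    rw [(le_iff_sub s v).mp (sub_le_self v u), zero_oplus] at this
    exact this
  have dis_v : odot s vv = zero := by
    rw [h2]
    show odot s (odot v (star s)) = zero
    rw [← odot_assoc, odot_comm s v, odot_assoc, odot_star_self, odot_zero]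
  have S_u : odot (nmul k t) (nmul k vv) = zero :=
    split_disjoint dec_u dis_u hu hk k (le_refl k)
  have S_v : odot (nmul k s) (nmul k vv) = zero :=
    split_disjoint dec_v dis_v hv hk k (le_refl k)
  have eA : sub (nmul k u) (nmul k vv) = nmul k t := by
    rw [← dec_u, nmul_oplus]
    exact oplus_sub_cancel S_u
  have eE : sub (nmul k v) (nmul k vv) = nmul k s := by
    rw [← dec_v, nmul_oplus]
    exact oplus_sub_cancel S_v
  set X := inf (nmul k u) (nmul k v) with hX
  have hY1 : le (sub X (nmul k vv)) (nmul k t) := by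
    have := sub_mono_left (inf_le_left (nmul k u) (nmul k v)) (nmul k vv)
    rw [eA] at this
    exact this
  have hY2 : le (sub X (nmul k vv)) (nmul k s) := by
    have := sub_mono_left (inf_le_right (nmul k u) (nmul k v)) (nmul k vv)
    rw [eE] at this
    exact this
  have hinf0 : inf (nmul k t) (nmul k s) = zero := by
    have d0 : inf t s = zero := inf_sub_sub u v
    have d1 : inf t (nmul k s) = zero := inf_nmul_zero d0 k
    have d2 : inf (nmul k s) t = zero := by rw [inf_comm]; exact d1
    have d3 : inf (nmul k s) (nmul k t) = zero := inf_nmul_zero d2 k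
    rw [inf_comm]; exact d3
  have hY0 : sub X (nmul k vv) = zero := by
    apply le_zero
    have := le_inf hY1 hY2
    rw [hinf0] at this
    exact this
  have hXle : le X (nmul k vv) := hY0
  have hXge : le (nmul k vv) X :=
    le_inf (nmul_mono (inf_le_left u v) k) (nmul_mono (inf_le_right u v) k)
  have hXeq : X = nmul k vv := le_antisymm' hXle hXge
  calc sub (nmul k u) (nmul k v) 
      = sub (nmul k u) X := (sub_inf _ _).symm
    _ = sub (nmul k u) (nmul k vv) := by rw [hXeq]
    _ = nmul k t := eA

theorem nmul_sub_count {q a b : ℕ} {x : A} (hd : odot x (nmul (q-1) x) = zero)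
    (ha : a ≤ q) (hb : b ≤ q) :
    sub (nmul a x) (nmul b x) = nmul (a - b) x := by
  rcases le_total a b with h | h
  · rw [show a - b = 0 by omega, nmul_zero]
    exact nmul_mono_count h x
  · have e : nmul a x = oplus (nmul (a-b) x) (nmul b x) := by
      rw [← nmul_add]; congr 1; omega
    rw [e]
    exact oplus_sub_cancel (nmul_disjoint hd (a-b) b (by omega))

end MVAlgebra
namespace MVAlgebra

variable {D : Type} [MVAlgebra D]

section Delta

variable {δ : ℕ → D → D}
variable (hδ : ∀ n : ℕ, 1 ≤ n → ∀ x : D,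
    nmul n (δ n x) = x ∧ odot (δ n x) (nmul (n - 1) (δ n x)) = (zero : D))

include hδ

lemma delta_unique {n : ℕ} (hn : 1 ≤ n) {x y : D}
    (h1 : nmul n y = x) (h2 : odot y (nmul (n-1) y) = zero) : y = δ n x := by
  refine nmul_inj hn ?_ h2 (hδ n hn x).2
  rw [h1, (hδ n hn x).1]

lemma delta_one (x : D) : δ 1 x = x := by
  refine (delta_unique hδ (le_refl 1) ?_ ?_).symm
  · exact nmul_one x
  · show odot x (nmul 0 x) = zero
    rw [nmul_zero, odot_zero]

lemma delta_nmul {m n : ℕ} (hm : 1 ≤ m) (hn : 1 ≤ n) (x : D) :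
    nmul m (δ (n*m) x) = δ n x := by
  have hnm : 1 ≤ n*m := Nat.one_le_iff_ne_zero.mpr (by positivity)
  refine delta_unique hδ hn ?_ ?_
  · rw [← nmul_mul, (hδ (n*m) hnm x).1]
  · rw [← nmul_mul]
    have hd := (hδ (n*m) hnm x).2
    exact nmul_disjoint hd m ((n-1)*m) (by
      have : m + (n-1)*m = n*m := by
        have : (1 + (n-1)) * m = n * m := by congr 1; omega
        rw [← this, Nat.add_mul, Nat.one_mul]
      omega)

lemma sc_scale {p q m : ℕ} (hm : 1 ≤ m) (hq : 1 ≤ q) (x : D) :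
    nmul (p*m) (δ (q*m) x) = nmul p (δ q x) := by
  rw [nmul_mul, delta_nmul hδ hm hq]

end Delta

end MVAlgebra
namespace QI

lemma one_val : (QI.one).1 = 1 := rfl
lemma zero_val : (QI.zero).1 = 0 := rfl
lemma oneOver_val (n : ℕ) : (QI.oneOver n).1 = 1/(n:ℚ) := rfl
lemma mul_val (r s : QI) : (QI.mul r s).1 = r.1 * s.1 := rfl

lemma odot_star_val (x b : QI) : (QI.odot x (QI.star b)).1 = 1 - min (1 - x.1 + b.1) 1 := by
  show 1 - min ((1 - x.1) + (1 - (1 - b.1))) 1 = 1 - min (1 - x.1 + b.1) 1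
  norm_num

lemma odot_star_val' (x b : QI) : (QI.odot x (QI.star b)).1 = max (x.1 - b.1) 0 := by
  rw [odot_star_val]
  rcases le_total (1 - x.1 + b.1) 1 with h | h
  · rw [min_eq_left h, max_eq_left (by linarith)]
    ring
  · rw [min_eq_right h, max_eq_right (by linarith)]
    ring

/-- `k/n` as element of `QI` -/
def fr (k n : ℕ) : QI :=
  ⟨min ((k:ℚ)/(n:ℚ)) 1, le_min (div_nonneg (by positivity) (by positivity)) zero_le_one,
    min_le_right _ _⟩

lemma fr_val {k n : ℕ} (h : k ≤ n) (hn : 1 ≤ n) : (fr k n).1 = (k:ℚ)/n := by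
  apply min_eq_left
  rw [div_le_one (by exact_mod_cast hn : (0:ℚ) < n)]
  exact_mod_cast h

lemma fr_zero (n : ℕ) : fr 0 n = QI.zero := by
  apply Subtype.ext
  show min ((0:ℚ)/n) 1 = 0
  norm_num

lemma fr_self {n : ℕ} (hn : 1 ≤ n) : fr n n = QI.one := by
  apply Subtype.ext
  rw [fr_val (le_refl n) hn, one_val]
  have : (n:ℚ) ≠ 0 := by positivity
  field_simp

lemma fr_one {n : ℕ} (hn : 1 ≤ n) : fr 1 n = QI.oneOver n := by
  apply Subtype.ext
  rw [fr_val hn hn, oneOver_val]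
  norm_num

lemma zero_eq_odot : QI.zero = QI.odot QI.one (QI.star QI.one) := by
  apply Subtype.ext
  rw [odot_star_val', zero_val, one_val]
  norm_num

lemma odot_succ_star {k n : ℕ} (hk : k + 1 ≤ n) (hn : 1 ≤ n) :
    QI.odot (fr (k+1) n) (QI.star (fr k n)) = QI.oneOver n := by
  have hn' : (0:ℚ) < n := by exact_mod_cast hn
  apply Subtype.ext
  rw [odot_star_val', fr_val hk hn, fr_val (by omega) hn, oneOver_val]
  have e1 : ((k+1:ℕ):ℚ)/n - (k:ℚ)/n = 1/n := by
    push_cast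
    field_simp
    ring
  rw [e1, max_eq_left (by positivity)]

lemma odot_star_succ {k n : ℕ} (hk : k + 1 ≤ n) (hn : 1 ≤ n) :
    QI.odot (fr k n) (QI.star (fr (k+1) n)) = QI.zero := by
  have hn' : (0:ℚ) < n := by exact_mod_cast hn
  apply Subtype.ext
  rw [odot_star_val', fr_val hk hn, fr_val (by omega) hn, zero_val]
  rw [max_eq_right]
  rw [sub_nonpos]
  gcongr <;> first | omega | (push_cast; linarith)

lemma odot_one_star {n : ℕ} (hn : 1 ≤ n) :
    QI.odot QI.one (QI.star (fr (n-1) n)) = QI.oneOver n := by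
  have hn' : (0:ℚ) < n := by exact_mod_cast hn
  apply Subtype.ext
  rw [odot_star_val', fr_val (by omega) hn, one_val, oneOver_val]
  have e : ((n-1 : ℕ) : ℚ) = (n:ℚ) - 1 := by
    have h1 : (1:ℕ) ≤ n := hn
    push_cast [h1]
    ring
  rw [e]
  have e2 : (1:ℚ) - ((n:ℚ)-1)/n = 1/n := by
    field_simp
    ring
  rw [e2, max_eq_left (by positivity)]

lemma num_den_val (r : QI) : ((r.1.num.toNat : ℚ))/(r.1.den : ℚ) = r.1 := by
  have hnn : 0 ≤ r.1.num := Rat.num_nonneg.mpr r.2.1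
  have e : ((r.1.num.toNat : ℚ)) = ((r.1.num : ℚ)) := by
    exact_mod_cast congrArg (fun z : ℤ => (z:ℚ)) (Int.toNat_of_nonneg hnn)
  rw [e, Rat.num_div_den]

lemma num_le_den (r : QI) : r.1.num.toNat ≤ r.1.den := by
  have h1 := r.2.2
  have hnn : 0 ≤ r.1.num := Rat.num_nonneg.mpr r.2.1
  have hd : (0:ℚ) < (r.1.den : ℚ) := by exact_mod_cast r.1.pos
  have hh := Rat.num_div_den r.1
  have h3 : (r.1.num : ℚ) ≤ (r.1.den : ℚ) := by
    have h5 : ((r.1.num:ℚ))/(r.1.den:ℚ) ≤ 1 := by rw [hh]; exact h1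
    rw [div_le_one hd] at h5
    exact h5
  have h4 : r.1.num ≤ (r.1.den : ℤ) := by exact_mod_cast h3
  omega

lemma den_pos (r : QI) : 1 ≤ r.1.den := r.1.pos

end QI
namespace MVAlgebra

section Back

variable {D : Type} [MVAlgebra D] {δ : ℕ → D → D}
variable (hδ : ∀ n : ℕ, 1 ≤ n → ∀ x : D,
    nmul n (δ n x) = x ∧ odot (δ n x) (nmul (n - 1) (δ n x)) = (zero : D))

include hδ

lemma rep (r : QI) (x : D) {p q : ℕ} (hq : 1 ≤ q) (hval : ((p:ℚ))/(q:ℚ) = r.1) :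
    nmul p (δ q x) = nmul (r.1.num.toNat) (δ (r.1.den) x) := by
  set n0 := r.1.num.toNat with hn0
  set d0 := r.1.den with hd0def
  have hd0 : 1 ≤ d0 := r.1.pos
  have hco : Nat.Coprime n0 d0 := by
    have hred := r.1.reduced
    have hnn : 0 ≤ r.1.num := Rat.num_nonneg.mpr r.2.1
    have e : r.1.num.natAbs = n0 := by rw [hn0]; omega
    rw [← e]
    exact hred
  have cross : p * d0 = n0 * q := by
    have hq' : ((q:ℚ)) ≠ 0 := by positivity
    have hd' : ((d0:ℚ)) ≠ 0 := by positivity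
    have hv2 := QI.num_den_val r
    have h2 : ((p:ℚ)) * (d0:ℚ) = (n0:ℚ) * (q:ℚ) := by
      rw [← hv2] at hval
      rw [div_eq_div_iff hq' hd'] at hval
      exact hval
    exact_mod_cast h2
  have hdvd : d0 ∣ q := by
    have h1 : d0 ∣ n0 * q := ⟨p, by rw [← cross]; exact Nat.mul_comm p d0⟩
    exact (Nat.Coprime.dvd_of_dvd_mul_left (Nat.Coprime.symm hco) h1)
  obtain ⟨m, rfl⟩ := hdvd
  have hm : 1 ≤ m := by
    rcases Nat.eq_zero_or_pos m with rfl | h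
    · omega
    · omega
  have hp : p = n0 * m := by
    have : p * d0 = (n0 * m) * d0 := by
      rw [cross]; ring
    exact Nat.eq_of_mul_eq_mul_right (by omega) this
  rw [hp]
  exact sc_scale hδ hm hd0 x

lemma delta_of_nmul {N j k : ℕ} (hk : 1 ≤ k) (hjk : j * k ≤ N) (hN : 1 ≤ N) (x : D) :
    δ k (nmul (j*k) (δ N x)) = nmul j (δ N x) := by
  refine (delta_unique hδ hk ?_ ?_).symm
  · rw [← nmul_mul, Nat.mul_comm]
  · rw [← nmul_mul]
    obtain ⟨k', rfl⟩ : ∃ k', k = k'+1 := ⟨k-1, by omega⟩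
    refine nmul_disjoint (hδ N hN x).2 j ((k'+1-1)*j) ?_
    have e : j + (k'+1-1)*j = j*(k'+1) := by
      simp only [Nat.succ_sub_one]
      ring
    omega

/-- DMV4' -/
lemma back4 (x : D) : nmul ((QI.one.1).num.toNat) (δ ((QI.one.1).den) x) = x := by
  have e1 : (QI.one.1).num.toNat = 1 := by norm_num [QI.one]
  have e2 : (QI.one.1).den = 1 := by norm_num [QI.one]
  rw [e1, e2, nmul_one, delta_one hδ]

/-- DMV3' -/
lemma back3 (r q : QI) (x : D) :
    nmul ((r.1).num.toNat) (δ ((r.1).den) (nmul ((q.1).num.toNat) (δ ((q.1).den) x))) =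
      nmul (((QI.mul r q).1).num.toNat) (δ (((QI.mul r q).1).den) x) := by
  set p1 := (r.1).num.toNat
  set d1 := (r.1).den
  set p2 := (q.1).num.toNat
  set d2 := (q.1).den
  have hd1 : 1 ≤ d1 := r.1.pos
  have hd2 : 1 ≤ d2 := q.1.pos
  have hp1 : p1 ≤ d1 := QI.num_le_den r
  have hp2 : p2 ≤ d2 := QI.num_le_den q
  have hN : 1 ≤ d1 * d2 := Nat.mul_pos hd1 hd2
  have e1 : δ d2 x = nmul d1 (δ (d1*d2) x) := by
    conv_lhs => rw [← (hδ (d1*d2) hN x).1]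
    exact delta_of_nmul hδ hd2 (le_refl _) hN x
  have e2 : nmul p2 (δ d2 x) = nmul (p2*d1) (δ (d1*d2) x) := by
    rw [e1, ← nmul_mul]
  have e3 : δ d1 (nmul (p2*d1) (δ (d1*d2) x)) = nmul p2 (δ (d1*d2) x) := by
    refine delta_of_nmul hδ hd1 ?_ hN x
    calc p2 * d1 ≤ d2 * d1 := Nat.mul_le_mul_right d1 hp2
      _ = d1 * d2 := Nat.mul_comm d2 d1
  rw [e2, e3, ← nmul_mul]
  refine rep hδ (QI.mul r q) x hN ?_
  rw [QI.mul_val, ← QI.num_den_val r, ← QI.num_den_val q]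
  push_cast
  rw [div_mul_div_comm]

/-- DMV2' -/
lemma back2 (r q : QI) (x : D) :
    nmul (((QI.odot r (QI.star q)).1).num.toNat) (δ (((QI.odot r (QI.star q)).1).den) x) =
      odot (nmul ((r.1).num.toNat) (δ ((r.1).den) x))
        (star (nmul ((q.1).num.toNat) (δ ((q.1).den) x))) := by
  set p1 := (r.1).num.toNat
  set d1 := (r.1).den
  set p2 := (q.1).num.toNat
  set d2 := (q.1).den
  have hd1 : 1 ≤ d1 := r.1.pos
  have hd2 : 1 ≤ d2 := q.1.pos
  have hp1 : p1 ≤ d1 := QI.num_le_den r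
  have hp2 : p2 ≤ d2 := QI.num_le_den q
  have hc : 1 ≤ d1 * d2 := Nat.mul_pos hd1 hd2
  have hd1' : ((d1:ℚ)) ≠ 0 := by positivity
  have hd2' : ((d2:ℚ)) ≠ 0 := by positivity
  have hval_a : (((p1*d2 : ℕ)):ℚ)/((d1*d2 : ℕ):ℚ) = r.1 := by
    push_cast
    rw [mul_div_mul_right _ _ hd2']
    exact QI.num_den_val r
  have hval_b : (((p2*d1 : ℕ)):ℚ)/((d1*d2 : ℕ):ℚ) = q.1 := by
    push_cast
    rw [mul_comm ((d1:ℚ)) ((d2:ℚ)), mul_div_mul_right _ _ hd1']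
    exact QI.num_den_val q
  have e_r : nmul p1 (δ d1 x) = nmul (p1*d2) (δ (d1*d2) x) := by
    rw [rep hδ r x hc hval_a]
  have e_q : nmul p2 (δ d2 x) = nmul (p2*d1) (δ (d1*d2) x) := by
    rw [rep hδ q x hc hval_b]
  have hval_ab : (((p1*d2 - p2*d1 : ℕ)):ℚ)/((d1*d2 : ℕ):ℚ) = (QI.odot r (QI.star q)).1 := by
    rw [QI.odot_star_val']
    have hcpos : (0:ℚ) < ((d1*d2 : ℕ):ℚ) := by positivity
    rcases le_total (p1*d2) (p2*d1) with h | h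
    · rw [show p1*d2 - p2*d1 = 0 by omega]
      have hrq : r.1 - q.1 ≤ 0 := by
        rw [← hval_a, ← hval_b, sub_nonpos]
        gcongr
      rw [max_eq_right hrq]
      norm_num
    · have e : (((p1*d2 - p2*d1 : ℕ)):ℚ) = ((p1*d2 : ℕ):ℚ) - ((p2*d1 : ℕ):ℚ) := by
        push_cast [h]
        ring
      rw [e, sub_div, hval_a, hval_b]
      rw [max_eq_left]
      rw [sub_nonneg, ← hval_a, ← hval_b]
      gcongr
  have e_lhs : nmul (((QI.odot r (QI.star q)).1).num.toNat)
      (δ (((QI.odot r (QI.star q)).1).den) x) = nmul (p1*d2 - p2*d1) (δ (d1*d2) x) := by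
    rw [rep hδ (QI.odot r (QI.star q)) x hc hval_ab]
  rw [e_lhs, e_r, e_q]
  exact (nmul_sub_count (hδ (d1*d2) hc x).2 (Nat.mul_le_mul_right d2 hp1)
    (by calc p2*d1 ≤ d2*d1 := Nat.mul_le_mul_right d1 hp2
          _ = d1*d2 := Nat.mul_comm d2 d1)).symm

/-- DMV1' -/
lemma back1 (r : QI) (x y : D) :
    nmul ((r.1).num.toNat) (δ ((r.1).den) (odot x (star y))) =
      odot (nmul ((r.1).num.toNat) (δ ((r.1).den) x))
        (star (nmul ((r.1).num.toNat) (δ ((r.1).den) y))) := by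
  set p1 := (r.1).num.toNat
  set d1 := (r.1).den
  have hd1 : 1 ≤ d1 := r.1.pos
  have hp1 : p1 ≤ d1 := QI.num_le_den r
  set u := δ d1 x with hu
  set v := δ d1 y with hv
  have hud : odot u (nmul (d1-1) u) = zero := (hδ d1 hd1 x).2
  have hvd : odot v (nmul (d1-1) v) = zero := (hδ d1 hd1 y).2
  have K6 : δ d1 (sub x y) = sub u v := by
    refine (delta_unique hδ hd1 ?_ ?_).symm
    · rw [← nmul_sub_exact hud hvd (le_refl d1), (hδ d1 hd1 x).1, (hδ d1 hd1 y).1]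
    · apply le_zero
      have m1 : le (sub u v) u := sub_le_self u v
      have s1 : le (odot (sub u v) (nmul (d1-1) (sub u v))) (odot u (nmul (d1-1) (sub u v))) :=
        odot_mono_left m1 _
      have s2 : le (odot u (nmul (d1-1) (sub u v))) (odot u (nmul (d1-1) u)) :=
        odot_mono_right (nmul_mono m1 (d1-1)) u
      rw [hud] at s2
      exact le_trans' s1 s2
  show nmul p1 (δ d1 (sub x y)) = sub (nmul p1 u) (nmul p1 v)
  rw [K6, nmul_sub_exact hud hvd hp1]

end Back

end MVAlgebra
namespace MVAlgebra

section Forward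

variable {D : Type} [MVAlgebra D]

lemma forward_main (s : QI → D → D)
    (h2 : ∀ (r q : QI) (x : D),
        s (QI.odot r (QI.star q)) x = odot (s r x) (star (s q x)))
    (h4 : ∀ x : D, s QI.one x = x) :
    ∀ n : ℕ, 1 ≤ n → ∀ x : D,
      nmul n (s (QI.oneOver n) x) = x ∧
      odot (s (QI.oneOver n) x) (nmul (n - 1) (s (QI.oneOver n) x)) = (zero : D) := by
  have hzero : ∀ z : D, s QI.zero z = zero := by
    intro z
    rw [QI.zero_eq_odot, h2, h4]
    exact odot_star_self z
  intro n hn x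
  have key : ∀ k, k ≤ n → nmul k (s (QI.oneOver n) x) = s (QI.fr k n) x := by
    intro k
    induction k with
    | zero =>
      intro _
      rw [QI.fr_zero, hzero, nmul_zero]
    | succ k ih =>
      intro hk1
      have hk := ih (by omega)
      set a := s (QI.fr (k+1) n) x with ha
      set b := s (QI.fr k n) x with hb
      set c := s (QI.oneOver n) x with hc
      have hab : odot a (star b) = c := by
        rw [← h2, QI.odot_succ_star hk1 hn]
      have hba : odot b (star a) = zero := by
        rw [← h2, QI.odot_star_succ hk1 hn]
        exact hzero x
      have L : oplus (odot a (star b)) b = oplus (odot b (star a)) a := luk' a b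
      rw [hab, hba, zero_oplus] at L
      rw [nmul_succ, hk, oplus_comm]
      exact L
  constructor
  · have h := key n (le_refl n)
    rw [QI.fr_self hn] at h
    rw [h, h4]
  · have hb' := key (n-1) (by omega)
    have hcval : s (QI.oneOver n) x = odot x (star (s (QI.fr (n-1) n) x)) := by
      have h := h2 QI.one (QI.fr (n-1) n) x
      rw [QI.odot_one_star hn, h4] at h
      exact h
    rw [hb', hcval, odot_assoc, odot_self_star, odot_zero]

end Forward

end MVAlgebra

open MVAlgebra in
/-- For an MV-algebra `D`, the axioms (DMV1')–(DMV4') for a family of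
scalar operations `s r` (`r ∈ [0,1] ∩ ℚ`) are equivalent to the DMV-algebra axioms
(DMV1)–(DMV2) for unary operations `δ_n` (`n ≥ 1`): the two kinds of structure exist
simultaneously, and the correspondence sends `s` to `δ_n x = (1/n)·x`. -/
theorem dmv_scalar_axioms_iff_delta_axioms {D : Type} [MVAlgebra D] :
    ((∃ s : QI → D → D,
        (∀ (r : QI) (x y : D),
            s r (odot x (star y)) = odot (s r x) (star (s r y))) ∧
        (∀ (r q : QI) (x : D),
            s (QI.odot r (QI.star q)) x = odot (s r x) (star (s q x))) ∧
        (∀ (r q : QI) (x : D), s r (s q x) = s (QI.mul r q) x) ∧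
        (∀ x : D, s QI.one x = x))
      ↔
      (∃ δ : ℕ → D → D, ∀ n : ℕ, 1 ≤ n → ∀ x : D,
          nmul n (δ n x) = x ∧
          odot (δ n x) (nmul (n - 1) (δ n x)) = (zero : D)))
    ∧
    -- the correspondence: if `s` satisfies (DMV1')–(DMV4'), then `δ_n x := (1/n)·x`
    -- satisfies (DMV1)–(DMV2)
    (∀ s : QI → D → D,
      ((∀ (r : QI) (x y : D),
            s r (odot x (star y)) = odot (s r x) (star (s r y))) ∧
        (∀ (r q : QI) (x : D),
            s (QI.odot r (QI.star q)) x = odot (s r x) (star (s q x))) ∧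
        (∀ (r q : QI) (x : D), s r (s q x) = s (QI.mul r q) x) ∧
        (∀ x : D, s QI.one x = x)) →
      ∀ n : ℕ, 1 ≤ n → ∀ x : D,
        nmul n (s (QI.oneOver n) x) = x ∧
        odot (s (QI.oneOver n) x) (nmul (n - 1) (s (QI.oneOver n) x)) = (zero : D)) := by
  constructor
  · constructor
    · rintro ⟨s, h1, h2, h3, h4⟩
      exact ⟨fun n x => s (QI.oneOver n) x, forward_main s h2 h4⟩
    · rintro ⟨δ, hδ⟩
      refine ⟨fun r x => nmul ((r.1).num.toNat) (δ ((r.1).den) x), ?_, ?_, ?_, ?_⟩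
      · exact fun r x y => back1 hδ r x y
      · exact fun r q x => back2 hδ r q x
      · exact fun r q x => back3 hδ r q x
      · exact fun x => back4 hδ x
  · rintro s ⟨h1, h2, h3, h4⟩
    exact forward_main s h2 h4
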